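/- For all real parameters η > 0 and φ > 0, the third raw moment of the PCD is ∑_{x=0}^∞ x³·p(x) = (η³ + 2(2φ+3)η² + 6(10φ+1)η + 120φ)/(η³(φ+η)). -/

import Mathlib

lemma pcd_aux_descFactorial_hasSum {r : ℝ} (k : ℕ) (hr : |r| < 1) :
    HasSum (fun n : ℕ => ((n + k).descFactorial k : ℝ) * r ^ n)
      (k.factorial / (1 - r) ^ (k + 1)) := by
  have h := (hasSum_choose_mul_geometric_of_norm_lt_one k
    (by rwa [Real.norm_eq_abs] : ‖r‖ < 1)).mul_left (k.factorial : ℝ)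
  have e1 : (fun n : ℕ => ((n + k).descFactorial k : ℝ) * r ^ n)
      = fun i => (k.factorial : ℝ) * (((i + k).choose k : ℝ) * r ^ i) := by
    funext n
    rw [← mul_assoc]
    norm_cast
    rw [Nat.descFactorial_eq_factorial_mul_choose]
  rw [e1, ← mul_one_div]
  exact h

set_option maxHeartbeats 1000000 in
/-- The third raw moment of the PCD. -/
theorem pcd_third_moment (η φ : ℝ) (hη : 0 < η) (hφ : 0 < φ) :
    ∑' x : ℕ, (x : ℝ) ^ 3 *
        ((η ^ 2 / ((φ + η) * (1 + η) ^ (x + 4)))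
          * ((1 + η) ^ 3
            + (φ * η ^ 2 / 6) * ((x : ℝ) + 1) * ((x : ℝ) + 2) * ((x : ℝ) + 3)))
      = (η ^ 3 + 2 * (2 * φ + 3) * η ^ 2 + 6 * (10 * φ + 1) * η + 120 * φ)
          / (η ^ 3 * (φ + η)) := by
  have hu : (0:ℝ) < 1 + η := by linarith
  have hune : (1:ℝ) + η ≠ 0 := ne_of_gt hu
  have hφη : φ + η ≠ 0 := ne_of_gt (by linarith)
  have hηne : η ≠ 0 := ne_of_gt hη
  have hr : |(1 + η)⁻¹| < 1 := by
    rw [abs_of_pos (by positivity)]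
    exact inv_lt_one_of_one_lt₀ (by linarith)
  have hpow : ∀ n : ℕ, η ^ 2 / ((φ + η) * (1 + η) ^ (n + 4))
      = (η ^ 2 / ((φ + η) * (1 + η) ^ 4)) * ((1 + η)⁻¹) ^ n := by
    intro n
    rw [pow_add, inv_pow]
    field_simp
  set b : ℝ := η ^ 2 / ((φ + η) * (1 + η) ^ 4) with hbdef
  have h0 := (pcd_aux_descFactorial_hasSum 0 hr).mul_left (-(b * (1 + η) ^ 3))
  have h1 := (pcd_aux_descFactorial_hasSum 1 hr).mul_left (7 * (b * (1 + η) ^ 3))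
  have h2 := (pcd_aux_descFactorial_hasSum 2 hr).mul_left (-(6 * (b * (1 + η) ^ 3)))
  have h3 := (pcd_aux_descFactorial_hasSum 3 hr).mul_left
    (b * (1 + η) ^ 3 - 64 * (b * (φ * η ^ 2 / 6)))
  have h4 := (pcd_aux_descFactorial_hasSum 4 hr).mul_left (61 * (b * (φ * η ^ 2 / 6)))
  have h5 := (pcd_aux_descFactorial_hasSum 5 hr).mul_left (-(15 * (b * (φ * η ^ 2 / 6))))
  have h6 := (pcd_aux_descFactorial_hasSum 6 hr).mul_left (b * (φ * η ^ 2 / 6))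
  have H := (((((h0.add h1).add h2).add h3).add h4).add h5).add h6
  have e : (fun x : ℕ => (x : ℝ) ^ 3 *
        ((η ^ 2 / ((φ + η) * (1 + η) ^ (x + 4)))
          * ((1 + η) ^ 3
            + (φ * η ^ 2 / 6) * ((x : ℝ) + 1) * ((x : ℝ) + 2) * ((x : ℝ) + 3))))
      = (fun n : ℕ =>
          -(b * (1 + η) ^ 3) * (((n + 0).descFactorial 0 : ℝ) * ((1 + η)⁻¹) ^ n)
          + 7 * (b * (1 + η) ^ 3) * (((n + 1).descFactorial 1 : ℝ) * ((1 + η)⁻¹) ^ n)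
          + -(6 * (b * (1 + η) ^ 3)) * (((n + 2).descFactorial 2 : ℝ) * ((1 + η)⁻¹) ^ n)
          + (b * (1 + η) ^ 3 - 64 * (b * (φ * η ^ 2 / 6)))
              * (((n + 3).descFactorial 3 : ℝ) * ((1 + η)⁻¹) ^ n)
          + 61 * (b * (φ * η ^ 2 / 6)) * (((n + 4).descFactorial 4 : ℝ) * ((1 + η)⁻¹) ^ n)
          + -(15 * (b * (φ * η ^ 2 / 6))) * (((n + 5).descFactorial 5 : ℝ) * ((1 + η)⁻¹) ^ n)
          + b * (φ * η ^ 2 / 6) * (((n + 6).descFactorial 6 : ℝ) * ((1 + η)⁻¹) ^ n)) := by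
    funext n
    rw [hpow n]
    simp only [Nat.descFactorial]
    push_cast
    ring
  rw [e, H.tsum_eq]
  have h1r : 1 - (1 + η)⁻¹ = η / (1 + η) := by field_simp; ring
  rw [h1r, hbdef]
  simp only [Nat.factorial]
  push_cast
  rw [div_pow, div_pow, div_pow, div_pow, div_pow, div_pow, div_pow]
  field_simp
  ring
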